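/- (Every polynomial has a weak tensor-splitting property.) Let A₁, A₂ be unital ℂ-algebras, let S₁, T₁ ∈ A₁ be not both zero and S₂, T₂ ∈ A₂ be not both zero, let p ∈ ℂ[x,y], and let n ≥ 1. If (p^n)⟦S₁⊗S₂, T₁⊗T₂⟧ = 0 in the algebraic tensor product A₁ ⊗ A₂, then there exist complex numbers a, b, c, d and positive integers l, m such that ((p_{a,b})^l)⟦S₁,T₁⟧ = 0 in A₁ and ((p_{c,d})^m)⟦S₂,T₂⟧ = 0 in A₂, where p_{a,b}(x,y) := p(ax, by). -/

import Mathlib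

open scoped TensorProduct

/-- Ordered evaluation: for `p = Σ c_{ij} x^i y^j ∈ ℂ[x,y]` and `S, T` in a unital
ℂ-algebra, `oev p S T = Σ c_{ij} S^i T^j`, keeping all powers of `S` to the left. -/
noncomputable def oev {A : Type*} [Ring A] [Algebra ℂ A]
    (p : MvPolynomial (Fin 2) ℂ) (S T : A) : A :=
  ∑ m ∈ p.support, p.coeff m • (S ^ m 0 * T ^ m 1)

/-- `p_{a,b}(x,y) := p(ax, by)`. -/
noncomputable def scaleVars (p : MvPolynomial (Fin 2) ℂ) (a b : ℂ) :
    MvPolynomial (Fin 2) ℂ :=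
  MvPolynomial.aeval
    (![MvPolynomial.C a * MvPolynomial.X 0, MvPolynomial.C b * MvPolynomial.X 1]) p

namespace WeakSplitAux

variable {A : Type*} [Ring A] [Algebra ℂ A] (S T : A)

lemma oev_eq_sum {p : MvPolynomial (Fin 2) ℂ} {F : Finset (Fin 2 →₀ ℕ)}
    (hF : p.support ⊆ F) : oev p S T = ∑ m ∈ F, p.coeff m • (S ^ m 0 * T ^ m 1) := by
  classical
  unfold oev
  refine Finset.sum_subset (f := fun m => p.coeff m • (S ^ m 0 * T ^ m 1)) hF
    fun m _ hm => ?_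
  show MvPolynomial.coeff m p • (S ^ m 0 * T ^ m 1) = 0
  rw [MvPolynomial.notMem_support_iff.mp hm, zero_smul]

lemma oev_add (p q : MvPolynomial (Fin 2) ℂ) :
    oev (p + q) S T = oev p S T + oev q S T := by
  classical
  rw [oev_eq_sum S T (F := p.support ∪ q.support) MvPolynomial.support_add,
    oev_eq_sum S T (F := p.support ∪ q.support) Finset.subset_union_left,
    oev_eq_sum S T (F := p.support ∪ q.support) Finset.subset_union_right,
    ← Finset.sum_add_distrib]
  simp [MvPolynomial.coeff_add, add_smul]

lemma oev_smul (c : ℂ) (p : MvPolynomial (Fin 2) ℂ) :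
    oev (c • p) S T = c • oev p S T := by
  classical
  rw [oev_eq_sum S T (F := p.support) MvPolynomial.support_smul, oev,
    Finset.smul_sum]
  simp [MvPolynomial.coeff_smul, smul_smul]

/-- `oev` as a linear map in the polynomial argument. -/
noncomputable def oevL (S T : A) : MvPolynomial (Fin 2) ℂ →ₗ[ℂ] A where
  toFun p := oev p S T
  map_add' := oev_add S T
  map_smul' := oev_smul S T

lemma oev_monomial (m : Fin 2 →₀ ℕ) (c : ℂ) :
    oev (MvPolynomial.monomial m c) S T = c • (S ^ m 0 * T ^ m 1) := by
  classical
  rcases eq_or_ne c 0 with rfl | hc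
  · simp [oev, MvPolynomial.support_monomial]
  · simp [oev, MvPolynomial.support_monomial, hc, MvPolynomial.coeff_monomial]

lemma oev_zero : oev (0 : MvPolynomial (Fin 2) ℂ) S T = 0 := by simp [oev]

lemma oev_one : oev (1 : MvPolynomial (Fin 2) ℂ) S T = 1 := by
  have : (1 : MvPolynomial (Fin 2) ℂ) = MvPolynomial.monomial 0 1 := by
    simp [MvPolynomial.monomial_zero']
  rw [this, oev_monomial]; simp

lemma oev_monomial_mul (a : Fin 2 →₀ ℕ) (c : ℂ) (r : MvPolynomial (Fin 2) ℂ) :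
    oev (MvPolynomial.monomial a c * r) S T = c • (S ^ a 0 * oev r S T * T ^ a 1) := by
  induction r using MvPolynomial.induction_on' with
  | monomial m' c' =>
    rw [MvPolynomial.monomial_mul, oev_monomial, oev_monomial]
    simp only [Finsupp.add_apply, pow_add, smul_smul]
    rw [mul_smul_comm, smul_mul_assoc, smul_smul]
    ring_nf
    rw [pow_mul_comm T (a 1) (m' 1)]
    simp [mul_assoc]
  | add p q hp hq =>
    rw [mul_add, oev_add, hp, hq, oev_add, mul_add, add_mul, smul_add]

lemma oev_mul_eq_zero (g r : MvPolynomial (Fin 2) ℂ) (hr : oev r S T = 0) :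
    oev (g * r) S T = 0 := by
  induction g using MvPolynomial.induction_on' with
  | monomial m c => rw [oev_monomial_mul, hr, mul_zero, zero_mul, smul_zero]
  | add p q hp hq => rw [add_mul, oev_add, hp, hq, add_zero]

/-- The ideal of polynomial "relations" of the ordered pair `(S, T)`. -/
noncomputable def relIdeal (S T : A) : Ideal (MvPolynomial (Fin 2) ℂ) where
  carrier := {r | oev r S T = 0}
  add_mem' := fun {p q} hp hq => by
    simp only [Set.mem_setOf_eq] at *
    rw [oev_add, hp, hq, add_zero]
  zero_mem' := oev_zero S T
  smul_mem' := fun g r hr => by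
    simp only [Set.mem_setOf_eq, smul_eq_mul] at *
    exact oev_mul_eq_zero S T g r hr

lemma mem_relIdeal_iff {r : MvPolynomial (Fin 2) ℂ} :
    r ∈ relIdeal S T ↔ oev r S T = 0 := Iff.rfl

lemma oev_algHom {B : Type*} [Ring B] [Algebra ℂ B] (f : A →ₐ[ℂ] B)
    (p : MvPolynomial (Fin 2) ℂ) : f (oev p S T) = oev p (f S) (f T) := by
  unfold oev
  rw [map_sum]
  simp [map_smul, map_mul, map_pow]

lemma scaleVars_monomial (m : Fin 2 →₀ ℕ) (c a b : ℂ) :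
    scaleVars (MvPolynomial.monomial m c) a b
      = MvPolynomial.monomial m (c * a ^ m 0 * b ^ m 1) := by
  unfold scaleVars
  rw [MvPolynomial.aeval_monomial,
    Finsupp.prod_fintype _ _ (fun i => pow_zero _), Fin.prod_univ_two,
    MvPolynomial.monomial_eq,
    Finsupp.prod_fintype _ _ (fun i => pow_zero _), Fin.prod_univ_two]
  simp only [Matrix.cons_val_zero, Matrix.cons_val_one, Matrix.head_cons,
    MvPolynomial.algebraMap_eq, mul_pow, map_mul, map_pow]
  ring

lemma smul_mul_smul' {α : ℂ} {β : ℂ} (X Y : A) :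
    (α • X) * (β • Y) = (α * β) • (X * Y) := by
  rw [smul_mul_assoc, mul_smul_comm, smul_smul]

lemma oev_scale (a b : ℂ) (p : MvPolynomial (Fin 2) ℂ) :
    oev (scaleVars p a b) S T = oev p (a • S) (b • T) := by
  induction p using MvPolynomial.induction_on' with
  | monomial m c =>
    rw [scaleVars_monomial, oev_monomial, oev_monomial, smul_pow, smul_pow,
      smul_mul_smul', smul_smul]
    ring_nf
  | add p q hp hq =>
    have : scaleVars (p + q) a b = scaleVars p a b + scaleVars q a b := by
      unfold scaleVars; rw [map_add]
    rw [this, oev_add, oev_add, hp, hq]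

lemma scaleVars_pow (a b : ℂ) (p : MvPolynomial (Fin 2) ℂ) (n : ℕ) :
    scaleVars (p ^ n) a b = (scaleVars p a b) ^ n := by
  unfold scaleVars; exact map_pow _ p n

lemma oev_tmul {A₁ A₂ : Type*} [Ring A₁] [Algebra ℂ A₁] [Ring A₂] [Algebra ℂ A₂]
    (S₁ T₁ : A₁) (S₂ T₂ : A₂) (p : MvPolynomial (Fin 2) ℂ) :
    oev p (S₁ ⊗ₜ[ℂ] S₂) (T₁ ⊗ₜ[ℂ] T₂)
      = ∑ m ∈ p.support,
          p.coeff m • ((S₁ ^ m 0 * T₁ ^ m 1) ⊗ₜ[ℂ] (S₂ ^ m 0 * T₂ ^ m 1)) := by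
  unfold oev
  refine Finset.sum_congr rfl fun m _ => ?_
  rw [Algebra.TensorProduct.tmul_pow, Algebra.TensorProduct.tmul_pow,
    Algebra.TensorProduct.tmul_mul_tmul]

lemma exists_dual {M : Type*} [AddCommGroup M] [Module ℂ M]
    {ι : Type*} (F : Finset ι) (v : ι → M) (t : ι → ℂ)
    (hc : ∀ w : ι → ℂ, ∑ m ∈ F, w m • v m = 0 → ∑ m ∈ F, w m * t m = 0) :
    ∃ φ : M →ₗ[ℂ] ℂ, ∀ m ∈ F, φ (v m) = t m := by
  classical
  let V : (↥F → ℂ) →ₗ[ℂ] M :=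
    { toFun := fun w => ∑ i : ↥F, w i • v ↑i
      map_add' := fun w₁ w₂ => by simp [add_smul, Finset.sum_add_distrib]
      map_smul' := fun c w => by simp [smul_smul, Finset.smul_sum] }
  let g : (↥F → ℂ) →ₗ[ℂ] ℂ :=
    { toFun := fun w => ∑ i : ↥F, w i * t ↑i
      map_add' := fun w₁ w₂ => by simp [add_mul, Finset.sum_add_distrib]
      map_smul' := fun c w => by simp [mul_assoc, Finset.mul_sum] }
  have hVsingle : ∀ j : ↥F, V (Pi.single j (1 : ℂ)) = v ↑j := by
    intro j
    show ∑ i : ↥F, (Pi.single j (1 : ℂ) : ↥F → ℂ) i • v ↑i = v ↑j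
    rw [Finset.sum_eq_single j
      (fun i _ hij => by rw [Pi.single_eq_of_ne hij, zero_smul])
      (fun hj => absurd (Finset.mem_univ j) hj)]
    rw [Pi.single_eq_same, one_smul]
  have hgsingle : ∀ j : ↥F, g (Pi.single j (1 : ℂ)) = t ↑j := by
    intro j
    show ∑ i : ↥F, (Pi.single j (1 : ℂ) : ↥F → ℂ) i * t ↑i = t ↑j
    rw [Finset.sum_eq_single j
      (fun i _ hij => by rw [Pi.single_eq_of_ne hij, zero_mul])
      (fun hj => absurd (Finset.mem_univ j) hj)]
    rw [Pi.single_eq_same, one_mul]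
  have hker : LinearMap.ker V ≤ LinearMap.ker g := by
    intro w hw
    rw [LinearMap.mem_ker] at hw ⊢
    set w' : ι → ℂ := fun m => if h : m ∈ F then w ⟨m, h⟩ else 0 with hw'def
    have hws : ∀ i : ↥F, w' ↑i = w i := by
      intro i; simp only [hw'def, i.2, dif_pos]
    have h1 : ∑ m ∈ F, w' m • v m = 0 := by
      rw [← Finset.sum_attach F (fun m => w' m • v m)]
      calc ∑ i ∈ F.attach, w' ↑i • v ↑i
          = ∑ i ∈ F.attach, w i • v ↑i :=
            Finset.sum_congr rfl fun i _ => by rw [hws i]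
        _ = V w := by rw [← Finset.univ_eq_attach]; rfl
        _ = 0 := hw
    have h2 := hc w' h1
    rw [← Finset.sum_attach F (fun m => w' m * t m)] at h2
    calc g w = ∑ i : ↥F, w i * t ↑i := rfl
      _ = ∑ i ∈ F.attach, w' ↑i * t ↑i := by
          rw [← Finset.univ_eq_attach]
          exact Finset.sum_congr rfl fun i _ => by rw [hws i]
      _ = 0 := h2
  let gbar := (LinearMap.ker V).liftQ g hker
  let Vbar := (LinearMap.ker V).liftQ V le_rfl
  have hinj : LinearMap.ker Vbar = ⊥ := Submodule.ker_liftQ_eq_bot _ _ _ le_rfl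
  obtain ⟨L, hL⟩ := Vbar.exists_leftInverse_of_injective hinj
  refine ⟨gbar.comp L, fun m hm => ?_⟩
  have hv : v m = V (Pi.single (⟨m, hm⟩ : ↥F) (1 : ℂ)) := (hVsingle ⟨m, hm⟩).symm
  have key : ∀ w : ↥F → ℂ, (gbar.comp L) (V w) = g w := by
    intro w
    have hVw : V w = Vbar (Submodule.Quotient.mk w) := rfl
    rw [LinearMap.comp_apply, hVw, ← LinearMap.comp_apply L Vbar, hL]
    rfl
  rw [hv, key]
  exact hgsingle ⟨m, hm⟩

/-- Main splitting step: a common zero of the relation ideal of `(S₂, T₂)`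
gives scaling parameters killing the first tensor factor. -/
lemma aux_split {A₁ A₂ : Type*} [Ring A₁] [Algebra ℂ A₁] [Ring A₂] [Algebra ℂ A₂]
    (S₁ T₁ : A₁) (S₂ T₂ : A₂) (h₂ : ¬(S₂ = 0 ∧ T₂ = 0))
    (q : MvPolynomial (Fin 2) ℂ)
    (h : oev q (S₁ ⊗ₜ[ℂ] S₂) (T₁ ⊗ₜ[ℂ] T₂) = 0) :
    ∃ a b : ℂ, oev (scaleVars q a b) S₁ T₁ = 0 := by
  classical
  have hnt : Nontrivial A₂ := by
    rcases not_and_or.mp h₂ with hS | hT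
    exacts [⟨S₂, 0, hS⟩, ⟨T₂, 0, hT⟩]
  set R := relIdeal S₂ T₂ with hR
  have hRne : R ≠ ⊤ := by
    intro htop
    have h1 : (1 : MvPolynomial (Fin 2) ℂ) ∈ R := htop ▸ Submodule.mem_top
    rw [hR, mem_relIdeal_iff, oev_one] at h1
    exact one_ne_zero h1
  have hz : (MvPolynomial.zeroLocus ℂ R).Nonempty := by
    by_contra hemp
    rw [Set.not_nonempty_iff_eq_empty] at hemp
    have hrad := MvPolynomial.vanishingIdeal_zeroLocus_eq_radical (K := ℂ) R
    rw [hemp, MvPolynomial.vanishingIdeal_empty] at hrad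
    exact hRne (Ideal.radical_eq_top.mp hrad.symm)
  obtain ⟨x, hx⟩ := hz
  refine ⟨x 0, x 1, ?_⟩
  set t : (Fin 2 →₀ ℕ) → ℂ := fun m => x 0 ^ m 0 * x 1 ^ m 1 with ht
  set u : (Fin 2 →₀ ℕ) → A₁ := fun m => S₁ ^ m 0 * T₁ ^ m 1 with hu
  set v : (Fin 2 →₀ ℕ) → A₂ := fun m => S₂ ^ m 0 * T₂ ^ m 1 with hv
  have hcompat : ∀ w : (Fin 2 →₀ ℕ) → ℂ,
      ∑ m ∈ q.support, w m • v m = 0 → ∑ m ∈ q.support, w m * t m = 0 := by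
    intro w hw
    set r : MvPolynomial (Fin 2) ℂ :=
      ∑ m ∈ q.support, MvPolynomial.monomial m (w m) with hrdef
    have hr : oev r S₂ T₂ = 0 := by
      have : oev r S₂ T₂ = ∑ m ∈ q.support, w m • v m := by
        show oevL S₂ T₂ r = _
        rw [hrdef, map_sum]
        exact Finset.sum_congr rfl fun m _ => oev_monomial S₂ T₂ m (w m)
      rw [this, hw]
    have hxr := hx r hr
    rw [hrdef, map_sum] at hxr
    calc ∑ m ∈ q.support, w m * t m
        = ∑ m ∈ q.support, MvPolynomial.eval x (MvPolynomial.monomial m (w m)) := by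
          refine Finset.sum_congr rfl fun m _ => ?_
          rw [MvPolynomial.eval_monomial,
            Finsupp.prod_fintype _ _ (fun i => pow_zero _), Fin.prod_univ_two]
      _ = 0 := hxr
  obtain ⟨φ, hφ⟩ := exists_dual q.support v t hcompat
  let Ψ : (A₁ ⊗[ℂ] A₂) →ₗ[ℂ] A₁ :=
    (TensorProduct.rid ℂ A₁).toLinearMap.comp (LinearMap.lTensor A₁ φ)
  have hΨ : ∀ (uu : A₁) (vv : A₂), Ψ (uu ⊗ₜ[ℂ] vv) = φ vv • uu := by
    intro uu vv
    show (TensorProduct.rid ℂ A₁) ((LinearMap.lTensor A₁ φ) (uu ⊗ₜ[ℂ] vv)) = _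
    rw [LinearMap.lTensor_tmul, TensorProduct.rid_tmul]
  have htm : ∑ m ∈ q.support, q.coeff m • (u m ⊗ₜ[ℂ] v m) = 0 := by
    rw [← oev_tmul]; exact h
  have h0 : ∑ m ∈ q.support, q.coeff m • (t m • u m) = 0 := by
    have hΨ0 := congrArg Ψ htm
    rw [map_sum, map_zero] at hΨ0
    calc ∑ m ∈ q.support, q.coeff m • (t m • u m)
        = ∑ m ∈ q.support, Ψ (q.coeff m • (u m ⊗ₜ[ℂ] v m)) := by
          refine Finset.sum_congr rfl fun m hm => ?_
          rw [map_smul, hΨ, hφ m hm]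
      _ = 0 := hΨ0
  rw [oev_scale, oev]
  calc ∑ m ∈ q.support, q.coeff m • ((x 0 • S₁) ^ m 0 * (x 1 • T₁) ^ m 1)
      = ∑ m ∈ q.support, q.coeff m • (t m • u m) := by
        refine Finset.sum_congr rfl fun m _ => ?_
        rw [smul_pow, smul_pow, smul_mul_smul']
    _ = 0 := h0

end WeakSplitAux

open WeakSplitAux in
/-- Theorem 4.4: every polynomial has a weak tensor-splitting property. -/
theorem weak_tensor_splitting
    {A₁ A₂ : Type*} [Ring A₁] [Algebra ℂ A₁] [Ring A₂] [Algebra ℂ A₂]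
    (S₁ T₁ : A₁) (S₂ T₂ : A₂)
    (h₁ : ¬(S₁ = 0 ∧ T₁ = 0)) (h₂ : ¬(S₂ = 0 ∧ T₂ = 0))
    (p : MvPolynomial (Fin 2) ℂ) (n : ℕ) (hn : 1 ≤ n)
    (h : oev (p ^ n) (S₁ ⊗ₜ[ℂ] S₂) (T₁ ⊗ₜ[ℂ] T₂) = 0) :
    ∃ (a b c d : ℂ) (l m : ℕ), 0 < l ∧ 0 < m ∧
      oev ((scaleVars p a b) ^ l) S₁ T₁ = 0 ∧
      oev ((scaleVars p c d) ^ m) S₂ T₂ = 0 := by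
  obtain ⟨a, b, hab⟩ := aux_split S₁ T₁ S₂ T₂ h₂ (p ^ n) h
  have h' : oev (p ^ n) (S₂ ⊗ₜ[ℂ] S₁) (T₂ ⊗ₜ[ℂ] T₁) = 0 := by
    have hcm := oev_algHom (S₁ ⊗ₜ[ℂ] S₂) (T₁ ⊗ₜ[ℂ] T₂)
      (Algebra.TensorProduct.comm ℂ A₁ A₂).toAlgHom (p ^ n)
    rw [h, map_zero] at hcm
    simpa [Algebra.TensorProduct.comm_tmul] using hcm.symm
  obtain ⟨c, d, hcd⟩ := aux_split S₂ T₂ S₁ T₁ h₁ (p ^ n) h'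
  refine ⟨a, b, c, d, n, n, hn, hn, ?_, ?_⟩
  · rw [← scaleVars_pow]; exact hab
  · rw [← scaleVars_pow]; exact hcd
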